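/- For every unweighted instance F of a Max-CSP Λ and every ε > 0, there exists a regular unweighted instance G of the same Max-CSP Λ such that: (a) Opt(F) ≤ Opt(G), and (b) for every assignment ζ to the variables of G there exists an assignment χ to the variables of F with Val_χ(F) ≥ Val_ζ(G) − ε. -/

import Mathlib

open Finset

/-- An instance of a CSP over domain `Fin q` with `n` variables: a finite list of
constraints, each a predicate applied to a scope of distinct variables, with
nonnegative weights summing to `1`. -/
structure CSPInstance (q n : ℕ) where
  m : ℕ
  ar : Fin m → ℕ
  pred : (r : Fin m) → ((Fin (ar r) → Fin q) → Bool)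
  scope : (r : Fin m) → Fin (ar r) → Fin n
  scope_inj : ∀ r, Function.Injective (scope r)
  w : Fin m → ℝ
  w_nonneg : ∀ r, 0 ≤ w r
  w_sum : ∑ r, w r = 1

namespace CSPInstance

variable {q n : ℕ}

/-- The value of an assignment: the total weight of satisfied constraints. -/
noncomputable def val (F : CSPInstance q n) (χ : Fin n → Fin q) : ℝ :=
  ∑ r, F.w r * (if F.pred r (fun i => χ (F.scope r i)) then 1 else 0)

/-- The optimum of a Max-CSP instance. -/
noncomputable def optMax (F : CSPInstance q n) : ℝ :=
  ⨆ χ : Fin n → Fin q, F.val χ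

/-- The optimum of a Min-CSP instance. -/
noncomputable def optMin (F : CSPInstance q n) : ℝ :=
  ⨅ χ : Fin n → Fin q, F.val χ

/-- An instance is unweighted if all constraints have weight `1/m`. -/
def Unweighted (F : CSPInstance q n) : Prop :=
  ∀ r, F.w r = 1 / F.m

/-- The degree of a variable: the number of constraints whose scope contains it. -/
noncomputable def degree (F : CSPInstance q n) (i : Fin n) : ℕ :=
  (Finset.univ.filter (fun r => ∃ j, F.scope r j = i)).card

/-- An instance is regular if all variables have the same degree. -/
def Regular (F : CSPInstance q n) : Prop :=
  ∃ d, ∀ i, F.degree i = d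

/-- `F` is an instance of the CSP `Λ`, viewed as a collection of predicates
(with their arities). -/
def InstanceOf (F : CSPInstance q n)
    (Λ : Set ((k : ℕ) × ((Fin k → Fin q) → Bool))) : Prop :=
  ∀ r, (⟨F.ar r, F.pred r⟩ : (k : ℕ) × ((Fin k → Fin q) → Bool)) ∈ Λ

end CSPInstance


section RegularizationAux

open CSPInstance

variable {q n : ℕ}

private lemma CSP_m_pos (F : CSPInstance q n) : 0 < F.m := by
  rcases Nat.eq_zero_or_pos F.m with h | h
  · exfalso
    have hw := F.w_sum
    rw [Finset.sum_eq_zero (fun x _ => absurd x.isLt (by omega))] at hw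
    norm_num at hw
  · exact h

/-- The padded degree. -/
private noncomputable def dd (F : CSPInstance q n) (i : Fin n) : ℕ := max (F.degree i) 1

private lemma one_le_dd (F : CSPInstance q n) (i : Fin n) : 1 ≤ dd F i := le_max_right _ _

private lemma deg_pos (F : CSPInstance q n) (r : Fin F.m) (j : Fin (F.ar r)) :
    0 < F.degree (F.scope r j) := by
  classical
  unfold CSPInstance.degree
  rw [Finset.card_pos]
  exact ⟨r, Finset.mem_filter.2 ⟨Finset.mem_univ _, ⟨j, rfl⟩⟩⟩

private lemma dd_eq (F : CSPInstance q n) {i : Fin n} (h : 0 < F.degree i) :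
    dd F i = F.degree i := Nat.max_eq_left h

/-- Variables of the regularized instance: one copy of variable `i` per occurrence. -/
private abbrev VV (F : CSPInstance q n) := Σ i : Fin n, Fin (F.degree i)

/-- Occurrence-selector functions. -/
private abbrev UU (F : CSPInstance q n) := ∀ i : Fin n, Fin (dd F i)

/-- Constraints of the regularized instance. -/
private abbrev KK (F : CSPInstance q n) := Fin F.m × UU F

private instance (F : CSPInstance q n) : Nonempty (UU F) :=
  ⟨fun i => ⟨0, one_le_dd F i⟩⟩

private noncomputable def eV (F : CSPInstance q n) : VV F ≃ Fin (Fintype.card (VV F)) :=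
  Fintype.equivFin _

private noncomputable def eK (F : CSPInstance q n) : KK F ≃ Fin (Fintype.card (KK F)) :=
  Fintype.equivFin _

private lemma kk_card_pos (F : CSPInstance q n) : 0 < Fintype.card (KK F) := by
  have : Nonempty (Fin F.m) := ⟨⟨0, CSP_m_pos F⟩⟩
  exact Fintype.card_pos

/-- The regularized instance. -/
private noncomputable def GG (F : CSPInstance q n) :
    CSPInstance q (Fintype.card (VV F)) where
  m := Fintype.card (KK F)
  ar ρ := F.ar ((eK F).symm ρ).1
  pred ρ := F.pred ((eK F).symm ρ).1
  scope ρ j := eV F ⟨F.scope ((eK F).symm ρ).1 j,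
    Fin.cast (dd_eq F (deg_pos F ((eK F).symm ρ).1 j))
      (((eK F).symm ρ).2 (F.scope ((eK F).symm ρ).1 j))⟩
  scope_inj ρ := fun j j' h =>
    F.scope_inj _ (congrArg Sigma.fst ((eV F).injective h))
  w _ := (Fintype.card (KK F) : ℝ)⁻¹
  w_nonneg _ := by positivity
  w_sum := by
    rw [Finset.sum_const, Finset.card_univ, Fintype.card_fin, nsmul_eq_mul,
      mul_inv_cancel₀]
    exact Nat.cast_ne_zero.mpr (kk_card_pos F).ne'

private lemma sigmaFin_mk_eq {c : Fin n → ℕ} {a a' : Fin n} {b : Fin (c a)} {b' : Fin (c a')} :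
    (⟨a, b⟩ : Σ i, Fin (c i)) = ⟨a', b'⟩ ↔ a = a' ∧ (b : ℕ) = (b' : ℕ) := by
  constructor
  · intro h
    obtain ⟨h1, h2⟩ := Sigma.mk.inj_iff.mp h
    subst h1
    exact ⟨rfl, congrArg Fin.val (eq_of_heq h2)⟩
  · rintro ⟨rfl, h2⟩
    exact congrArg (Sigma.mk a) (Fin.ext h2)

private lemma card_pi_fiber (c : Fin n → ℕ) (i : Fin n) (w : ℕ) (hw : w < c i) :
    c i * (Finset.univ.filter fun u : ∀ i', Fin (c i') => (u i : ℕ) = w).card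
      = ∏ i', c i' := by
  classical
  rw [show (Finset.univ.filter fun u : ∀ i', Fin (c i') => (u i : ℕ) = w).card
      = Fintype.card {u : ∀ i', Fin (c i') // (u i : ℕ) = w} from
    (Fintype.card_subtype _).symm]
  have h1 : Fintype.card {u : ∀ i', Fin (c i') // (u i : ℕ) = w}
      = Fintype.card ({a : Fin (c i) // (a : ℕ) = w} × ((j : {j // j ≠ i}) → Fin (c j.1))) := by
    refine Fintype.card_congr ?_
    refine (Equiv.subtypeEquiv (Equiv.piSplitAt i fun i' => Fin (c i')) ?_).trans
      Equiv.prodSubtypeFstEquivSubtypeProd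
    intro u
    simp [Equiv.piSplitAt]
  have h2 : Fintype.card {a : Fin (c i) // (a : ℕ) = w} = 1 :=
    Fintype.card_eq_one_iff.mpr ⟨⟨⟨w, hw⟩, rfl⟩, fun y => Subtype.ext (Fin.ext y.2)⟩
  have h3 : Fintype.card ((j : {j // j ≠ i}) → Fin (c j.1))
      = ∏ j ∈ Finset.univ.erase i, c j := by
    rw [Fintype.card_pi]
    simp only [Fintype.card_fin]
    exact (Finset.prod_subtype (Finset.univ.erase i) (by simp) c).symm
  rw [h1, Fintype.card_prod, h2, one_mul, h3]
  exact Finset.mul_prod_erase Finset.univ c (Finset.mem_univ i)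

/-- The summand of `(GG F).val` indexed by `KK F`. -/
private noncomputable def gterm (F : CSPInstance q n)
    (ζ : Fin (Fintype.card (VV F)) → Fin q) (k : KK F) : ℝ :=
  (Fintype.card (KK F) : ℝ)⁻¹ *
    (if F.pred k.1 (fun j => ζ (eV F ⟨F.scope k.1 j,
        Fin.cast (dd_eq F (deg_pos F k.1 j)) (k.2 (F.scope k.1 j))⟩)) then 1 else 0)

private lemma val_GG (F : CSPInstance q n) (ζ : Fin (Fintype.card (VV F)) → Fin q) :
    (GG F).val ζ = ∑ k : KK F, gterm F ζ k := by
  rw [← Equiv.sum_comp (eK F).symm (gterm F ζ)]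
  exact Finset.sum_congr rfl fun ρ _ => rfl

private lemma kk_card_cast (F : CSPInstance q n) :
    (Fintype.card (KK F) : ℝ) = (F.m : ℝ) * (Fintype.card (UU F) : ℝ) := by
  rw [show Fintype.card (KK F) = F.m * Fintype.card (UU F) from by
    rw [Fintype.card_prod, Fintype.card_fin]]
  push_cast
  ring

private lemma scale_eq (F : CSPInstance q n) (t : ℝ) :
    (Fintype.card (UU F) : ℝ) * ((Fintype.card (KK F) : ℝ)⁻¹ * t) = 1 / (F.m : ℝ) * t := by
  have hm : (F.m : ℝ) ≠ 0 := Nat.cast_ne_zero.mpr (CSP_m_pos F).ne'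
  have hC : (Fintype.card (UU F) : ℝ) ≠ 0 := Nat.cast_ne_zero.mpr Fintype.card_pos.ne'
  rw [kk_card_cast, mul_inv, one_div]
  rw [show (Fintype.card (UU F) : ℝ) * ((F.m : ℝ)⁻¹ * (Fintype.card (UU F) : ℝ)⁻¹ * t)
      = ((Fintype.card (UU F) : ℝ) * (Fintype.card (UU F) : ℝ)⁻¹) * ((F.m : ℝ)⁻¹ * t) from by
    ring, mul_inv_cancel₀ hC, one_mul]

private lemma val_GG_diag (F : CSPInstance q n) (hFunw : F.Unweighted) (χ : Fin n → Fin q) :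
    (GG F).val (fun x => χ ((eV F).symm x).1) = F.val χ := by
  rw [val_GG, Fintype.sum_prod_type]
  unfold CSPInstance.val
  refine Finset.sum_congr rfl fun r _ => ?_
  have hterm : ∀ u : UU F, gterm F (fun x => χ ((eV F).symm x).1) (r, u)
      = (Fintype.card (KK F) : ℝ)⁻¹ *
        (if F.pred r (fun j => χ (F.scope r j)) then 1 else 0) := by
    intro u
    unfold gterm
    simp only [Equiv.symm_apply_apply]
  rw [Finset.sum_congr rfl fun u _ => hterm u, Finset.sum_const, Finset.card_univ,
    nsmul_eq_mul, scale_eq, hFunw r]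

private lemma val_GG_avg (F : CSPInstance q n) (hq : 0 < q) (hFunw : F.Unweighted)
    (ζ : Fin (Fintype.card (VV F)) → Fin q) :
    ∑ u : UU F, F.val (fun i => if h : 0 < F.degree i
        then ζ (eV F ⟨i, Fin.cast (dd_eq F h) (u i)⟩) else ⟨0, hq⟩)
      = (Fintype.card (UU F) : ℝ) * (GG F).val ζ := by
  have key : ∀ (u : UU F),
      F.val (fun i => if h : 0 < F.degree i
        then ζ (eV F ⟨i, Fin.cast (dd_eq F h) (u i)⟩) else ⟨0, hq⟩)
      = ∑ r, (Fintype.card (UU F) : ℝ) * gterm F ζ (r, u) := by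
    intro u
    unfold CSPInstance.val
    refine Finset.sum_congr rfl fun r _ => ?_
    have hfun : (fun j => (fun i => if h : 0 < F.degree i
          then ζ (eV F ⟨i, Fin.cast (dd_eq F h) (u i)⟩) else ⟨0, hq⟩) (F.scope r j))
        = fun j => ζ (eV F ⟨F.scope r j,
            Fin.cast (dd_eq F (deg_pos F r j)) (u (F.scope r j))⟩) := by
      funext j
      exact dif_pos (deg_pos F r j)
    rw [hFunw r]
    unfold gterm
    rw [scale_eq]
    congr 1
    rw [hfun]
  calc ∑ u : UU F, F.val (fun i => if h : 0 < F.degree i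
        then ζ (eV F ⟨i, Fin.cast (dd_eq F h) (u i)⟩) else ⟨0, hq⟩)
      = ∑ u : UU F, ∑ r, (Fintype.card (UU F) : ℝ) * gterm F ζ (r, u) :=
        Finset.sum_congr rfl fun u _ => key u
    _ = ∑ r, ∑ u : UU F, (Fintype.card (UU F) : ℝ) * gterm F ζ (r, u) := Finset.sum_comm
    _ = (Fintype.card (UU F) : ℝ) * ∑ k : KK F, gterm F ζ k := by
        rw [Fintype.sum_prod_type, Finset.mul_sum]
        exact Finset.sum_congr rfl fun r _ => (Finset.mul_sum _ _ _).symm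
    _ = (Fintype.card (UU F) : ℝ) * (GG F).val ζ := by rw [val_GG]

private lemma GG_degree (F : CSPInstance q n) (x : Fin (Fintype.card (VV F))) :
    (GG F).degree x = ∏ i, dd F i := by
  classical
  obtain ⟨⟨i, v⟩, rfl⟩ := (eV F).surjective x
  have step1 : (Finset.univ.filter
        fun ρ : Fin (Fintype.card (KK F)) => ∃ j, (GG F).scope ρ j = eV F ⟨i, v⟩).card
      = (Finset.univ.filter
        fun k : KK F => (∃ j, F.scope k.1 j = i) ∧ ((k.2 i : ℕ) = (v : ℕ))).card := by
    refine Finset.card_equiv (eK F).symm fun ρ => ?_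
    simp only [Finset.mem_filter, Finset.mem_univ, true_and]
    show (∃ j, eV F ⟨F.scope ((eK F).symm ρ).1 j,
        Fin.cast (dd_eq F (deg_pos F ((eK F).symm ρ).1 j))
          (((eK F).symm ρ).2 (F.scope ((eK F).symm ρ).1 j))⟩ = eV F ⟨i, v⟩) ↔ _
    simp only [Equiv.apply_eq_iff_eq, sigmaFin_mk_eq, Fin.coe_cast]
    generalize (v : ℕ) = w
    constructor
    · rintro ⟨j, h1, h2⟩
      rw [h1] at h2
      exact ⟨⟨j, h1⟩, h2⟩
    · rintro ⟨⟨j, h1⟩, h2⟩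
      rw [← h1] at h2
      exact ⟨j, h1, h2⟩
  have step2 : (Finset.univ.filter
        fun k : KK F => (∃ j, F.scope k.1 j = i) ∧ ((k.2 i : ℕ) = (v : ℕ))).card
      = (Finset.univ.filter fun r : Fin F.m => ∃ j, F.scope r j = i).card *
        (Finset.univ.filter fun u : UU F => (u i : ℕ) = (v : ℕ)).card := by
    have h := congrArg Finset.card (Finset.filter_product
      (s := (Finset.univ : Finset (Fin F.m))) (t := (Finset.univ : Finset (UU F)))
      (fun r : Fin F.m => ∃ j, F.scope r j = i) (fun u : UU F => (u i : ℕ) = (v : ℕ)))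
    rw [Finset.card_product] at h
    rw [← Finset.univ_product_univ]
    exact h
  have hvpos : 0 < F.degree i := Nat.lt_of_le_of_lt (Nat.zero_le _) v.isLt
  rw [show (GG F).degree (eV F ⟨i, v⟩) = (Finset.univ.filter
      fun ρ : Fin (Fintype.card (KK F)) => ∃ j, (GG F).scope ρ j = eV F ⟨i, v⟩).card from by
    unfold CSPInstance.degree
    congr 1
    exact (Finset.filter_congr_decidable _ _ _).symm]
  rw [step1, step2]
  have step3 : (Finset.univ.filter fun r : Fin F.m => ∃ j, F.scope r j = i).card
      = dd F i := by
    rw [dd_eq F hvpos]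
    rfl
  rw [step3]
  exact card_pi_fiber (dd F) i (v : ℕ)
    (Nat.lt_of_lt_of_le v.isLt (by rw [dd_eq F hvpos]))

end RegularizationAux

/-- For every unweighted instance `F` of a Max-CSP `Λ` and every `ε > 0`,
there exists a regular unweighted instance `G` of the same Max-CSP `Λ` such that
(a) `Opt(F) ≤ Opt(G)`, and (b) for every assignment `ζ` of `G` there is an assignment
`χ` of `F` with `Val_χ(F) ≥ Val_ζ(G) − ε`. -/
theorem regularization_max {q n : ℕ} (hq : 0 < q)
    (Λ : Set ((k : ℕ) × ((Fin k → Fin q) → Bool))) (hΛfin : Λ.Finite)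
    (F : CSPInstance q n) (hF : F.InstanceOf Λ) (hFunw : F.Unweighted)
    (ε : ℝ) (hε : 0 < ε) :
    ∃ (n' : ℕ) (G : CSPInstance q n'),
      G.InstanceOf Λ ∧ G.Unweighted ∧ G.Regular ∧
      F.optMax ≤ G.optMax ∧
      ∀ ζ : Fin n' → Fin q, ∃ χ : Fin n → Fin q,
        G.val ζ - ε ≤ F.val χ := by
  classical
  refine ⟨Fintype.card (VV F), GG F, fun ρ => hF _, fun ρ => (one_div _).symm,
    ⟨∏ i, dd F i, GG_degree F⟩, ?_, ?_⟩
  · have hbdd : BddAbove (Set.range (GG F).val) := (Set.finite_range _).bddAbove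
    haveI : Nonempty (Fin n → Fin q) := ⟨fun _ => ⟨0, hq⟩⟩
    refine ciSup_le fun χ => le_ciSup_of_le hbdd (fun x => χ ((eV F).symm x).1) ?_
    exact le_of_eq (val_GG_diag F hFunw χ).symm
  · intro ζ
    have hne : (Finset.univ : Finset (UU F)).Nonempty := Finset.univ_nonempty
    have hle : ∑ _u : UU F, (GG F).val ζ
        ≤ ∑ u : UU F, F.val (fun i => if h : 0 < F.degree i
            then ζ (eV F ⟨i, Fin.cast (dd_eq F h) (u i)⟩) else ⟨0, hq⟩) := by
      rw [val_GG_avg F hq hFunw ζ, Finset.sum_const, Finset.card_univ, nsmul_eq_mul]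
    obtain ⟨u, -, hu⟩ := Finset.exists_le_of_sum_le hne hle
    exact ⟨_, by linarith⟩
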